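/- Let H be a symmetric p×p matrix with 0 ⪯ H ⪯ I and tr(H) = 1 (i.e., H in the Fantope F¹), let \hat{v} be its top unit eigenvector, and let v be any unit vector. Then ‖\hat{v}\hat{v}^T − vv^T‖_F ≤ 2‖vv^T − H‖_F. -/

import Mathlib

open BigOperators Matrix
open scoped Classical

noncomputable def enorm {p : ℕ} (v : Fin p → ℝ) : ℝ := Real.sqrt (∑ i, (v i) ^ 2)

noncomputable def fnorm {p : ℕ} (A : Matrix (Fin p) (Fin p) ℝ) : ℝ :=
  Real.sqrt (∑ i, ∑ j, (A i j) ^ 2)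

def outer {p : ℕ} (u v : Fin p → ℝ) : Matrix (Fin p) (Fin p) ℝ :=
  Matrix.of fun i j => u i * v j

noncomputable def emb {p : ℕ} (A : Matrix (Fin p) (Fin p) ℝ) :
    EuclideanSpace ℝ (Fin p × Fin p) :=
  (WithLp.equiv 2 (Fin p × Fin p → ℝ)).symm (fun q => A q.1 q.2)

lemma fnorm_eq_norm {p : ℕ} (A : Matrix (Fin p) (Fin p) ℝ) : fnorm A = ‖emb A‖ := by
  rw [EuclideanSpace.norm_eq]
  simp [fnorm, emb, Fintype.sum_prod_type, Real.norm_eq_abs, sq_abs]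

lemma emb_sub {p : ℕ} (A B : Matrix (Fin p) (Fin p) ℝ) : emb (A - B) = emb A - emb B := rfl

lemma enorm_sq {p : ℕ} (u : Fin p → ℝ) (h : _root_.enorm u = 1) : ∑ i, (u i) ^ 2 = 1 := by
  have := congrArg (· ^ 2) h
  simpa [_root_.enorm, Real.sq_sqrt (Finset.sum_nonneg fun i _ => sq_nonneg (u i))] using this

lemma key {p : ℕ} (H : Matrix (Fin p) (Fin p) ℝ) (u : Fin p → ℝ) (h : _root_.enorm u = 1) :
    ∑ i, ∑ j, (outer u u i j - H i j) ^ 2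
      = 1 + (∑ i, ∑ j, (H i j) ^ 2) - 2 * (u ⬝ᵥ (H *ᵥ u)) := by
  have hu := enorm_sq u h
  have e1 : ∑ i, ∑ j, (outer u u i j - H i j) ^ 2
      = ∑ i, ∑ j, ((u i)^2 * (u j)^2 + (H i j)^2 - 2 * (u i * (H i j * u j))) := by
    apply Finset.sum_congr rfl; intro i _
    apply Finset.sum_congr rfl; intro j _
    simp [outer]; ring
  rw [e1]
  simp only [Finset.sum_sub_distrib, Finset.sum_add_distrib, ← Finset.mul_sum,
    ← Finset.sum_mul]
  have e2 : ∑ i, ∑ j, (u i)^2 * (u j)^2 = 1 := by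
    simp only [← Finset.mul_sum, hu, mul_one]
  have e3 : ∑ i, ∑ j, (u i * (H i j * u j)) = u ⬝ᵥ (H *ᵥ u) := by
    simp [dotProduct, mulVec, Finset.mul_sum]
  rw [hu, show u ⬝ᵥ H *ᵥ u = ∑ i, u i * ∑ j, H i j * u j from rfl]
  ring

theorem stmt12 {p : ℕ} (H : Matrix (Fin p) (Fin p) ℝ)
    (hsymm : H.IsSymm) (hpsd : H.PosSemidef)
    (h1 : ((1 : Matrix (Fin p) (Fin p) ℝ) - H).PosSemidef) (htr : H.trace = 1)
    (vh : Fin p → ℝ) (hvh : _root_.enorm vh = 1) (μ : ℝ) (heig : H *ᵥ vh = μ • vh)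
    (htop : ∀ x : Fin p → ℝ, _root_.enorm x = 1 → x ⬝ᵥ (H *ᵥ x) ≤ vh ⬝ᵥ (H *ᵥ vh))
    (v : Fin p → ℝ) (hv : _root_.enorm v = 1) :
    fnorm (outer vh vh - outer v v) ≤ 2 * fnorm (outer v v - H) := by
  have h1 : fnorm (outer vh vh - H) ≤ fnorm (outer v v - H) := by
    apply Real.sqrt_le_sqrt
    simp only [Matrix.sub_apply]
    rw [key H vh hvh, key H v hv]
    linarith [htop v hv]
  have h2 : fnorm (H - outer v v) = fnorm (outer v v - H) := by
    unfold fnorm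
    congr 1
    apply Finset.sum_congr rfl; intro i _
    apply Finset.sum_congr rfl; intro j _
    simp only [Matrix.sub_apply]
    ring
  calc fnorm (outer vh vh - outer v v)
      ≤ fnorm (outer vh vh - H) + fnorm (H - outer v v) := by
        rw [fnorm_eq_norm, fnorm_eq_norm, fnorm_eq_norm, emb_sub, emb_sub, emb_sub]
        exact norm_sub_le_norm_sub_add_norm_sub _ _ _
    _ ≤ 2 * fnorm (outer v v - H) := by rw [h2]; linarith
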